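/- With F, G = ∂F/∂z and α̃ as in the context, for every v ∈ ℂ³ \ {0} with G(v) ≠ 0 the following holds: [α̃(v)] = [v] in ℙ²(ℂ) if and only if F(v) = 0. In particular the birational involution α of ℙ² induced by α̃ fixes the cubic Γ = {F = 0} pointwise (away from the locus G = 0), and its fixed points in the open set {G ≠ 0} are exactly the points of Γ. -/

import Mathlib

/-! Statement 15 (Lemma 4.3, fixed locus): for a homogeneous cubic `F` vanishing at
`b = (0:0:1)` and `α̃(v) = (v₀·G(v), v₁·G(v), v₂·G(v) - 2F(v))` with `G = ∂F/∂z`, a point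
`v ≠ 0` with `G(v) ≠ 0` satisfies `[α̃(v)] = [v]` in `ℙ²(ℂ)` (i.e. `α̃(v)` is a nonzero
scalar multiple of `v`) if and only if `F(v) = 0`. -/

noncomputable section

open MvPolynomial

--- auxiliary lemma
lemma eval_smul_homog {σ : Type*} [Fintype σ] {F : MvPolynomial σ ℂ} {n : ℕ}
    (hF : F.IsHomogeneous n) (c : ℂ) (v : σ → ℂ) :
    eval (c • v) F = c ^ n * eval v F := by
  rw [eval_eq, eval_eq, Finset.mul_sum]
  refine Finset.sum_congr rfl fun d hd => ?_
  have hdeg : ∑ i ∈ d.support, d i = n := by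
    have h := hF (mem_support_iff.mp hd)
    simpa [Finsupp.weight, Finsupp.linearCombination, Finsupp.sum] using h
  rw [← hdeg]
  simp only [Pi.smul_apply, smul_eq_mul, mul_pow]
  rw [Finset.prod_mul_distrib, Finset.prod_pow_eq_pow_sum]
  ring

/-- The rational map `(x:y:z) ↦ (x : y : z - 2F/F_z)`, written on homogeneous coordinates. -/
def alphaTilde (F : MvPolynomial (Fin 3) ℂ) (v : Fin 3 → ℂ) : Fin 3 → ℂ :=
  ![v 0 * eval v (pderiv 2 F), v 1 * eval v (pderiv 2 F),
    v 2 * eval v (pderiv 2 F) - 2 * eval v F]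

theorem stmt15 (F : MvPolynomial (Fin 3) ℂ) (hF : F.IsHomogeneous 3)
    (hFb : eval (fun i : Fin 3 => if i = 2 then (1 : ℂ) else 0) F = 0) :
    ∀ v : Fin 3 → ℂ, v ≠ 0 → eval v (pderiv 2 F) ≠ 0 →
      ((∃ c : ℂ, c ≠ 0 ∧ alphaTilde F v = c • v) ↔ eval v F = 0) := by
  intro v hv hG
  constructor
  · rintro ⟨c, hc, heq⟩
    by_cases h01 : v 0 = 0 ∧ v 1 = 0
    · have hveq : v = (v 2) • (fun i : Fin 3 => if i = 2 then (1:ℂ) else 0) := by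
        funext i; fin_cases i <;> simp [h01.1, h01.2]
      rw [hveq, eval_smul_homog hF, hFb]; ring
    · have hcG : c = eval v (pderiv 2 F) := by
        rcases not_and_or.mp h01 with h0 | h1
        · have h := congrFun heq 0
          simp only [alphaTilde, Matrix.cons_val_zero, Pi.smul_apply, smul_eq_mul] at h
          have h' : eval v (pderiv 2 F) * v 0 = c * v 0 := by linear_combination h
          exact (mul_right_cancel₀ h0 h').symm
        · have h := congrFun heq 1
          simp only [alphaTilde, Matrix.cons_val_one, Matrix.head_cons, Pi.smul_apply,
            smul_eq_mul, Matrix.cons_val_zero] at h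
          have h' : eval v (pderiv 2 F) * v 1 = c * v 1 := by linear_combination h
          exact (mul_right_cancel₀ h1 h').symm
      have h2 := congrFun heq 2
      simp only [alphaTilde, Pi.smul_apply, smul_eq_mul, hcG, Matrix.cons_val_two,
        Matrix.tail_cons, Matrix.head_cons] at h2
      have h2F : (2 : ℂ) * eval v F = 0 := by linear_combination -h2
      have := mul_eq_zero.mp h2F
      simpa using this
  · intro hFv
    refine ⟨eval v (pderiv 2 F), hG, ?_⟩
    funext i; fin_cases i <;> simp [alphaTilde, hFv, mul_comm]
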